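/- Let p < q be two primes, and let A be the set of positive integers of the form p^a q^b. Suppose there is a constant c_1 > 0 such that for every integer n ≥ 2, the largest element a ∈ A with a ≤ n satisfies n − a < n/(log n)^{c_1} whenever n ≥ 16. Then there is a constant c > 0 depending only on p, q, c_1 such that every integer n ≥ 2 can be written as a sum of at most 2(log n)/(c_1 log log n) + (log n)^{1/2}/log c_2 + O(1) elements of A, where c_2 > 1 depends only on p. -/

import Mathlib

/-- The set of positive integers of the form `p^a * q^b`. -/
def InApq (p q n : ℕ) : Prop := ∃ a b : ℕ, n = p ^ a * q ^ b



lemma apq_pos {p q n : ℕ} (hp : 1 ≤ p) (hq : 1 ≤ q) (h : InApq p q n) : 1 ≤ n := by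
  obtain ⟨a, b, rfl⟩ := h
  exact Nat.one_le_iff_ne_zero.mpr (by positivity)

lemma small_lemma (p q : ℕ) (hp : p.Prime) :
    ∀ m : ℕ, ∃ L : List ℕ, (∀ x ∈ L, InApq p q x) ∧ L.sum = m ∧
      (L.length : ℝ) ≤ Real.log m / Real.log ((p:ℝ)/((p:ℝ)-1)) + 1 := by
  have hp2 : (2:ℝ) ≤ p := by exact_mod_cast hp.two_le
  have hp1 : (0:ℝ) < (p:ℝ) - 1 := by linarith
  have hp0 : (0:ℝ) < (p:ℝ) := by linarith
  have hc₂ : 1 < (p:ℝ)/((p:ℝ)-1) := (one_lt_div hp1).mpr (by linarith)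
  have hlc : 0 < Real.log ((p:ℝ)/((p:ℝ)-1)) := Real.log_pos hc₂
  intro m
  induction m using Nat.strong_induction_on with
  | _ m IH =>
    rcases Nat.eq_zero_or_pos m with rfl | hm
    · exact ⟨[], by simp, by simp, by simp⟩
    · set k := Nat.log p m with hk
      have h1 : p ^ k ≤ m := Nat.pow_log_le_self p (by omega)
      have h2 : m < p ^ (k+1) := Nat.lt_pow_succ_log_self hp.one_lt m
      have hppos : 1 ≤ p ^ k := Nat.one_le_pow _ _ hp.pos
      set r := m - p ^ k with hr
      have hrm : r < m := by omega
      rcases Nat.eq_zero_or_pos r with hr0 | hr1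
      · refine ⟨[p ^ k], ?_, by simp; omega, ?_⟩
        · intro x hx; simp at hx; exact ⟨k, 0, by simp [hx]⟩
        · simp
          positivity
      · obtain ⟨L', hL'mem, hL'sum, hL'len⟩ := IH r hrm
        refine ⟨p ^ k :: L', ?_, by simp [hL'sum]; omega, ?_⟩
        · rintro x hx
          rcases List.mem_cons.mp hx with rfl | hx
          · exact ⟨k, 0, by simp⟩
          · exact hL'mem x hx
        · have hc2 : (m:ℝ) < (p:ℝ) * (p:ℝ)^k := by
            calc (m:ℝ) < ((p:ℝ))^(k+1) := by exact_mod_cast h2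
              _ = (p:ℝ) * (p:ℝ)^k := by ring
          have hcast : ((r:ℕ):ℝ) < (m:ℝ) / ((p:ℝ)/((p:ℝ)-1)) := by
            have hc1 : ((r:ℕ):ℝ) = (m:ℝ) - (p:ℝ)^k := by
              rw [hr]; push_cast [Nat.cast_sub h1]; ring
            rw [hc1, div_div_eq_mul_div, lt_div_iff₀ hp0]
            nlinarith
          have hlog : Real.log r ≤ Real.log m - Real.log ((p:ℝ)/((p:ℝ)-1)) := by
            have h3 : Real.log r < Real.log ((m:ℝ) / ((p:ℝ)/((p:ℝ)-1))) :=
              Real.log_lt_log (by exact_mod_cast hr1) hcast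
            rw [Real.log_div (by positivity) (by positivity)] at h3
            exact h3.le
          have hdiv : Real.log r / Real.log ((p:ℝ)/((p:ℝ)-1)) ≤
              Real.log m / Real.log ((p:ℝ)/((p:ℝ)-1)) - 1 := by
            rw [le_sub_iff_add_le, div_add' _ _ _ (ne_of_gt hlc), div_le_div_iff₀ hlc hlc]
            nlinarith
          simp only [List.length_cons]
          push_cast
          linarith

lemma max_lemma (p q : ℕ) (m : ℕ) (hm : 1 ≤ m) :
    ∃ a : ℕ, InApq p q a ∧ a ≤ m ∧ ∀ a', InApq p q a' → a' ≤ m → a' ≤ a := by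
  classical
  set S := (Finset.range (m+1)).filter (fun a => InApq p q a) with hS
  have h1 : 1 ∈ S := by
    rw [hS, Finset.mem_filter, Finset.mem_range]
    exact ⟨by omega, 0, 0, by simp⟩
  have hmem := Finset.mem_filter.mp (S.max'_mem ⟨1, h1⟩)
  refine ⟨S.max' ⟨1, h1⟩, hmem.2, ?_, ?_⟩
  · have := Finset.mem_range.mp hmem.1; omega
  · intro a' ha' hle
    exact S.le_max' a' (by rw [hS, Finset.mem_filter, Finset.mem_range]; exact ⟨by omega, ha'⟩)

lemma big_lemma (p q : ℕ) (hp : p.Prime) (hq : q.Prime)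
    (c₁ : ℝ) (hc₁ : 0 < c₁)
    (hgreedy : ∀ n : ℕ, 16 ≤ n → ∀ a : ℕ, InApq p q a → a ≤ n →
      (∀ a' : ℕ, InApq p q a' → a' ≤ n → a' ≤ a) →
      ((n - a : ℕ) : ℝ) < (n : ℝ) / (Real.log n) ^ c₁)
    (n : ℕ) (hn : 10000 ≤ n) :
    ∀ m : ℕ, ∃ L : List ℕ, (∀ x ∈ L, InApq p q x) ∧ L.sum = m ∧
      (L.length : ℝ) ≤ max 0 ((Real.log m - Real.log n ^ ((1:ℝ)/2)) /
          (c₁/2 * Real.log (Real.log n))) +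
        Real.log n ^ ((1:ℝ)/2) / Real.log ((p:ℝ)/((p:ℝ)-1)) + 2 := by
  have hp2 : (2:ℝ) ≤ p := by exact_mod_cast hp.two_le
  have hp1 : (0:ℝ) < (p:ℝ) - 1 := by linarith
  have hc₂ : 1 < (p:ℝ)/((p:ℝ)-1) := (one_lt_div hp1).mpr (by linarith)
  have hlc : 0 < Real.log ((p:ℝ)/((p:ℝ)-1)) := Real.log_pos hc₂
  set T : ℝ := Real.log n ^ ((1:ℝ)/2) with hTdef
  set D : ℝ := c₁/2 * Real.log (Real.log n) with hDdef
  have hlogn : 9 ≤ Real.log n := by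
    rw [Real.le_log_iff_exp_le (by positivity : (0:ℝ) < (n:ℝ))]
    calc Real.exp 9 = Real.exp 1 ^ (9:ℕ) := by rw [← Real.exp_nat_mul]; norm_num
      _ ≤ 2.7182818286 ^ (9:ℕ) := by have h := Real.exp_one_lt_d9; gcongr
      _ ≤ 10000 := by norm_num
      _ ≤ (n:ℝ) := by exact_mod_cast hn
  have hlognpos : (0:ℝ) < Real.log n := by linarith
  have hT3 : 3 ≤ T := by
    rw [hTdef]
    calc (3:ℝ) = (9:ℝ) ^ ((1:ℝ)/2) := by
          rw [show (9:ℝ) = 3^(2:ℕ) by norm_num, ← Real.rpow_natCast 3 2,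
            ← Real.rpow_mul (by norm_num)]
          norm_num
      _ ≤ Real.log n ^ ((1:ℝ)/2) := by
          apply Real.rpow_le_rpow (by norm_num) hlogn (by norm_num)
  have hllogn : 0 < Real.log (Real.log n) := Real.log_pos (by linarith)
  have hD : 0 < D := by
    rw [hDdef]; positivity
  have hlogT : Real.log T = 1/2 * Real.log (Real.log n) := by
    rw [hTdef, Real.log_rpow hlognpos]
  intro m
  induction m using Nat.strong_induction_on with
  | _ m IH =>
    by_cases hcase : Real.log m ≤ T
    · obtain ⟨L, hmem, hsum, hlen⟩ := small_lemma p q hp m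
      refine ⟨L, hmem, hsum, ?_⟩
      have h1 : Real.log m / Real.log ((p:ℝ)/((p:ℝ)-1)) ≤ T / Real.log ((p:ℝ)/((p:ℝ)-1)) := by
        gcongr
      have h2 : (0:ℝ) ≤ max 0 ((Real.log m - T) / D) := le_max_left _ _
      linarith
    · push_neg at hcase
      -- m ≥ 16
      have hm16 : 16 ≤ m := by
        by_contra h
        push_neg at h
        have : Real.log m ≤ Real.log 16 := by
          have : (m:ℝ) ≤ 16 := by exact_mod_cast Nat.le_of_lt_succ (by omega)
          rcases Nat.eq_zero_or_pos m with rfl | hm0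
          · simpa using Real.log_nonneg (by norm_num : (1:ℝ) ≤ 16)
          · exact Real.log_le_log (by exact_mod_cast hm0) this
        have h16e : (16:ℝ) < Real.exp 3 := by
          calc (16:ℝ) < 2.7182818283 ^ (3:ℕ) := by norm_num
            _ < Real.exp 1 ^ (3:ℕ) := by have h := Real.exp_one_gt_d9; gcongr
            _ = Real.exp 3 := by rw [← Real.exp_nat_mul]; norm_num
        have h16 : Real.log 16 < 3 := by
          have := Real.log_lt_log (by norm_num : (0:ℝ) < 16) h16e
          simpa [Real.log_exp] using this
        linarith
      have hm1 : 1 ≤ m := by omega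
      obtain ⟨a, haA, ham, hamax⟩ := max_lemma p q m hm1
      have ha1 : 1 ≤ a := apq_pos hp.one_le hq.one_le haA
      have hg := hgreedy m hm16 a haA ham hamax
      set r := m - a with hrdef
      have hrm : r < m := by omega
      obtain ⟨L', hmem', hsum', hlen'⟩ := IH r hrm
      by_cases hr : Real.log r ≤ T
      · obtain ⟨L'', hmem'', hsum'', hlen''⟩ := small_lemma p q hp r
        refine ⟨a :: L'', ?_, ?_, ?_⟩
        · rintro x hx
          rcases List.mem_cons.mp hx with rfl | hx
          · exact haA
          · exact hmem'' x hx
        · simp [hsum'']; omega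
        · simp only [List.length_cons]
          push_cast
          have h1 : Real.log r / Real.log ((p:ℝ)/((p:ℝ)-1)) ≤ T / Real.log ((p:ℝ)/((p:ℝ)-1)) := by
            gcongr
          have h2 : (0:ℝ) ≤ max 0 ((Real.log m - T) / D) := le_max_left _ _
          linarith
      · push_neg at hr
        have hr2 : 2 ≤ r := by
          by_contra h
          push_neg at h
          have hz : Real.log r = 0 := by
            rcases (by omega : r = 0 ∨ r = 1) with h' | h' <;> rw [h'] <;> simp
          linarith
        have hrpos : (0:ℝ) < r := by exact_mod_cast (by omega : 0 < r)
        have hlogm_pos : 0 < Real.log m := by linarith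
        -- key: log r < log m - D
        have hkey : Real.log r < Real.log m - D := by
          have h3 : Real.log r < Real.log ((m:ℝ) / (Real.log m) ^ c₁) :=
            Real.log_lt_log hrpos hg
          rw [Real.log_div (by positivity) (by positivity),
            Real.log_rpow hlogm_pos] at h3
          have h4 : Real.log T ≤ Real.log (Real.log m) :=
            Real.log_le_log (by linarith) hcase.le
          have h5 : D ≤ c₁ * Real.log (Real.log m) := by
            rw [hDdef]
            have := mul_le_mul_of_nonneg_left h4 hc₁.le
            rw [hlogT] at this
            linarith
          linarith
        have hmax_r : max 0 ((Real.log r - T) / D) = (Real.log r - T) / D := by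
          apply max_eq_right
          apply div_nonneg (by linarith) hD.le
        have hstep : (Real.log r - T) / D + 1 ≤ (Real.log m - T) / D := by
          have h6 : (Real.log r - T + D) / D ≤ (Real.log m - T) / D := by
            gcongr
            linarith
          have h7 : (Real.log r - T + D) / D = (Real.log r - T) / D + 1 := by
            field_simp
          linarith
        have hmaxm : (Real.log m - T) / D ≤ max 0 ((Real.log m - T) / D) := le_max_right _ _
        refine ⟨a :: L', ?_, ?_, ?_⟩
        · rintro x hx
          rcases List.mem_cons.mp hx with rfl | hx
          · exact haA
          · exact hmem' x hx
        · simp [hsum']; omega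
        · simp only [List.length_cons]
          push_cast
          rw [hmax_r] at hlen'
          linarith

theorem stmt_6 (p q : ℕ) (hp : p.Prime) (hq : q.Prime) (hpq : p < q)
    (c₁ : ℝ) (hc₁ : 0 < c₁)
    (hgreedy : ∀ n : ℕ, 16 ≤ n → ∀ a : ℕ, InApq p q a → a ≤ n →
      (∀ a' : ℕ, InApq p q a' → a' ≤ n → a' ≤ a) →
      ((n - a : ℕ) : ℝ) < (n : ℝ) / (Real.log n) ^ c₁) :
    ∃ c₂ : ℝ, 1 < c₂ ∧ ∃ C : ℝ, 0 ≤ C ∧ ∀ n : ℕ, 2 ≤ n →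
      ∃ L : List ℕ, (∀ a ∈ L, InApq p q a) ∧ L.sum = n ∧
        (L.length : ℝ) ≤ 2 * Real.log n / (c₁ * Real.log (Real.log n)) +
          (Real.log n) ^ ((1 : ℝ) / 2) / Real.log c₂ + C := by
  have hp2 : (2:ℝ) ≤ p := by exact_mod_cast hp.two_le
  have hp1 : (0:ℝ) < (p:ℝ) - 1 := by linarith
  set c₂ : ℝ := (p:ℝ)/((p:ℝ)-1) with hc₂def
  have hc₂ : 1 < c₂ := (one_lt_div hp1).mpr (by linarith)
  have hlc : 0 < Real.log c₂ := Real.log_pos hc₂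
  set K : ℝ := 2 * Real.log 2 / (c₁ * Real.log (Real.log 2)) with hKdef
  have hlog2pos : 0 < Real.log 2 := Real.log_pos (by norm_num)
  have hlog2lt1 : Real.log 2 < 1 := by
    have h2e : (2:ℝ) < Real.exp 1 := by
      have := Real.exp_one_gt_d9; linarith
    have := Real.log_lt_log (by norm_num : (0:ℝ) < 2) h2e
    simpa [Real.log_exp] using this
  have hK : K ≤ 0 := by
    rw [hKdef]
    apply div_nonpos_of_nonneg_of_nonpos (by positivity)
    have : Real.log (Real.log 2) < 0 := Real.log_neg hlog2pos hlog2lt1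
    nlinarith
  set C : ℝ := Real.log 10000 / Real.log c₂ + 3 - K with hCdef
  have hlog10000 : (0:ℝ) ≤ Real.log 10000 := Real.log_nonneg (by norm_num)
  have hC : 0 ≤ C := by
    rw [hCdef]
    have := div_nonneg hlog10000 hlc.le
    linarith
  refine ⟨c₂, hc₂, C, hC, ?_⟩
  intro n hn
  by_cases hbig : 10000 ≤ n
  · obtain ⟨L, hmem, hsum, hlen⟩ := big_lemma p q hp hq c₁ hc₁ hgreedy n hbig n
    rw [← hc₂def] at hlen
    refine ⟨L, hmem, hsum, ?_⟩
    have hlogn : 9 ≤ Real.log n := by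
      rw [Real.le_log_iff_exp_le (by positivity : (0:ℝ) < (n:ℝ))]
      calc Real.exp 9 = Real.exp 1 ^ (9:ℕ) := by rw [← Real.exp_nat_mul]; norm_num
        _ ≤ 2.7182818286 ^ (9:ℕ) := by have h := Real.exp_one_lt_d9; gcongr
        _ ≤ 10000 := by norm_num
        _ ≤ (n:ℝ) := by exact_mod_cast hbig
    have hll : 0 < Real.log (Real.log n) := Real.log_pos (by linarith)
    have hD : 0 < c₁/2 * Real.log (Real.log n) := by positivity
    have hT0 : 0 ≤ Real.log n ^ ((1:ℝ)/2) := Real.rpow_nonneg (by linarith) _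
    have heq : Real.log n / (c₁/2 * Real.log (Real.log n)) =
        2 * Real.log n / (c₁ * Real.log (Real.log n)) := by
      field_simp
    have hmaxb : max 0 ((Real.log n - Real.log n ^ ((1:ℝ)/2)) /
        (c₁/2 * Real.log (Real.log n))) ≤
        2 * Real.log n / (c₁ * Real.log (Real.log n)) := by
      apply max_le
      · rw [← heq]; positivity
      · rw [← heq]; gcongr; linarith
    have hC2 : 2 ≤ C := by
      rw [hCdef]
      have := div_nonneg hlog10000 hlc.le
      linarith
    set X := max 0 ((Real.log (n:ℝ) - Real.log (n:ℝ) ^ ((1:ℝ)/2)) / (c₁/2 * Real.log (Real.log (n:ℝ)))) with hX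
    set Y := Real.log (n:ℝ) ^ ((1:ℝ)/2) / Real.log c₂ with hY
    set Z := 2 * Real.log (n:ℝ) / (c₁ * Real.log (Real.log (n:ℝ))) with hZ
    linarith
  · push_neg at hbig
    obtain ⟨L, hmem, hsum, hlen⟩ := small_lemma p q hp n
    refine ⟨L, hmem, hsum, ?_⟩
    have hn0 : (0:ℝ) < (n:ℝ) := by positivity
    have hlogle : Real.log n ≤ Real.log 10000 := by
      apply Real.log_le_log hn0
      exact_mod_cast hbig.le
    have hT0 : 0 ≤ Real.log n ^ ((1:ℝ)/2) := Real.rpow_nonneg (Real.log_natCast_nonneg n) _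
    have hT2 : 0 ≤ (Real.log n) ^ ((1:ℝ)/2) / Real.log c₂ := div_nonneg hT0 hlc.le
    rcases eq_or_lt_of_le hn with h2 | h3
    · -- n = 2
      have hn2 : n = 2 := h2.symm
      subst hn2
      have hKeq : 2 * Real.log ((2:ℕ):ℝ) / (c₁ * Real.log (Real.log ((2:ℕ):ℝ))) = K := by
        norm_num
        exact hKdef.symm
      rw [hKeq]
      have h1 : Real.log ((2:ℕ):ℝ) / Real.log c₂ ≤ Real.log 10000 / Real.log c₂ := by
        gcongr
      rw [hCdef]
      linarith
    · -- 3 ≤ n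
      have h3n : 3 ≤ n := h3
      have he : (1:ℝ) ≤ Real.log n := by
        rw [Real.le_log_iff_exp_le hn0]
        have := Real.exp_one_lt_d9
        have h3' : (3:ℝ) ≤ (n:ℝ) := by exact_mod_cast h3n
        linarith
      have ht1 : 0 ≤ 2 * Real.log n / (c₁ * Real.log (Real.log n)) := by
        apply div_nonneg (by linarith)
        apply mul_nonneg hc₁.le
        exact Real.log_nonneg he
      have h1 : Real.log n / Real.log c₂ ≤ Real.log 10000 / Real.log c₂ := by gcongr
      rw [hCdef]
      linarith
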